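/- Let P₁, P₂, P₃, P₄ be pairwise distinct quaternions and let Q(P₁,P₂,P₃,P₄) = (P₁−P₂)(P₂−P₃)⁻¹(P₃−P₄)(P₄−P₁)⁻¹ be their quaternionic cross-ratio. Then Q(P₁,P₂,P₃,P₄) is real (i.e., equal to r·1 for some r ∈ ℝ) if and only if the four points P₁, P₂, P₃, P₄, regarded as points of the Euclidean space ℍ ≅ ℝ⁴, are collinear or concyclic (cospherical and coplanar, i.e., they lie on a common circle in some two-dimensional affine subspace). -/

import Mathlib

/-- Quaternionic cross-ratio of four points. -/
noncomputable def crossRatio (P₁ P₂ P₃ P₄ : Quaternion ℝ) : Quaternion ℝ :=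
  (P₁ - P₂) * (P₂ - P₃)⁻¹ * (P₃ - P₄) * (P₄ - P₁)⁻¹

namespace CRAux

open Quaternion EuclideanGeometry

/-! ### Quaternion algebra helpers -/

lemma smul_one_coe (r : ℝ) : r • (1 : Quaternion ℝ) = (r : Quaternion ℝ) := by
  rw [← Quaternion.coe_one, Quaternion.smul_coe, mul_one]

lemma conj_eq_coe_iff (d q : Quaternion ℝ) (hd : d ≠ 0) (r : ℝ) :
    d * q * d⁻¹ = (r : Quaternion ℝ) ↔ q = (r : Quaternion ℝ) := by
  constructor
  · intro h
    have h2 : d * q = (r : Quaternion ℝ) * d := by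
      calc d * q = d * q * d⁻¹ * d := by
            rw [mul_assoc, inv_mul_cancel₀ hd, mul_one]
        _ = (r : Quaternion ℝ) * d := by rw [h]
    rw [Quaternion.coe_commutes] at h2
    exact mul_left_cancel₀ hd h2
  · rintro rfl
    rw [Quaternion.mul_coe_eq_smul, smul_mul_assoc, mul_inv_cancel₀ hd,
      ← Quaternion.coe_one, Quaternion.smul_coe, mul_one]

lemma smul_inv (r : ℝ) (q : Quaternion ℝ) : (r • q)⁻¹ = r⁻¹ • q⁻¹ := by
  rw [← Quaternion.coe_mul_eq_smul, ← Quaternion.coe_mul_eq_smul, mul_inv_rev,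
    ← Quaternion.coe_inv, Quaternion.coe_commutes]

/-- cross ratio of four points on a line is always a real scalar -/
lemma crossRatio_line (p u : Quaternion ℝ) (t₁ t₂ t₃ t₄ : ℝ) :
    ∃ r : ℝ, crossRatio (t₁ • u + p) (t₂ • u + p) (t₃ • u + p) (t₄ • u + p)
      = (r : Quaternion ℝ) := by
  have hsub : ∀ s t : ℝ, (s • u + p) - (t • u + p) = (s - t) • u := by
    intro s t; rw [sub_smul]; abel
  unfold crossRatio
  rw [hsub, hsub, hsub, hsub, smul_inv, smul_inv,
    smul_mul_smul_comm, smul_mul_smul_comm, smul_mul_smul_comm]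
  rcases eq_or_ne u 0 with rfl | hu
  · exact ⟨0, by simp⟩
  · refine ⟨(t₁ - t₂) * (t₂ - t₃)⁻¹ * (t₃ - t₄) * (t₄ - t₁)⁻¹, ?_⟩
    rw [mul_inv_cancel₀ hu, one_mul, mul_inv_cancel₀ hu,
      ← Quaternion.coe_one, Quaternion.smul_coe, mul_one]

lemma crossRatio_iff (P₁ P₂ P₃ P₄ d x' w' : Quaternion ℝ) (h23 : P₂ ≠ P₃) (h14 : P₁ ≠ P₄)
    (hdd : d = P₃ - P₂) (hxd : x' = d⁻¹ * (P₁ - P₂)) (hwd : w' = d⁻¹ * (P₄ - P₂)) :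
    (∃ r : ℝ, crossRatio P₁ P₂ P₃ P₄ = (r : Quaternion ℝ)) ↔
    ∃ r : ℝ, x' * (1 - w') = (r : Quaternion ℝ) * (w' - x') := by
  have hd : d ≠ 0 := by rw [hdd]; exact sub_ne_zero.2 h23.symm
  have hx1 : P₁ - P₂ = d * x' := by rw [hxd, ← mul_assoc, mul_inv_cancel₀ hd, one_mul]
  have hw1 : P₄ - P₂ = d * w' := by rw [hwd, ← mul_assoc, mul_inv_cancel₀ hd, one_mul]
  have h23e : P₂ - P₃ = -d := by rw [hdd]; abel
  have h34 : P₃ - P₄ = d * (1 - w') := by rw [mul_sub, mul_one, ← hw1, hdd]; abel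
  have h41 : P₄ - P₁ = d * (w' - x') := by rw [mul_sub, ← hw1, ← hx1]; abel
  have hwx : w' - x' ≠ 0 := by
    intro h0
    apply h14
    have h1 : P₄ - P₁ = 0 := by rw [h41, h0, mul_zero]
    exact (sub_eq_zero.1 h1).symm
  have hcr : crossRatio P₁ P₂ P₃ P₄ = -(d * (x' * (1 - w') * (w' - x')⁻¹) * d⁻¹) := by
    unfold crossRatio
    rw [hx1, h23e, h34, h41, inv_neg, mul_inv_rev]
    have e1 : d * x' * -d⁻¹ * (d * (1 - w')) * ((w' - x')⁻¹ * d⁻¹)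
        = -(d * x' * ((d⁻¹ * d) * ((1 - w') * ((w' - x')⁻¹ * d⁻¹)))) := by
      noncomm_ring
    rw [e1, inv_mul_cancel₀ hd, one_mul]
    noncomm_ring
  constructor
  · rintro ⟨r, hr⟩
    rw [hcr] at hr
    have h1 : d * (x' * (1 - w') * (w' - x')⁻¹) * d⁻¹ = ((-r : ℝ) : Quaternion ℝ) := by
      rw [Quaternion.coe_neg, ← hr, neg_neg]
    have h2 := (conj_eq_coe_iff d _ hd (-r)).1 h1
    refine ⟨-r, ?_⟩
    calc x' * (1 - w') = x' * (1 - w') * ((w' - x')⁻¹ * (w' - x')) := by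
          rw [inv_mul_cancel₀ hwx, mul_one]
      _ = ((-r : ℝ) : Quaternion ℝ) * (w' - x') := by rw [← mul_assoc, h2]
  · rintro ⟨r, hr⟩
    refine ⟨-r, ?_⟩
    rw [hcr]
    have h2 : x' * (1 - w') * (w' - x')⁻¹ = (r : Quaternion ℝ) := by
      rw [hr, mul_assoc, mul_inv_cancel₀ hwx, mul_one]
    rw [h2, (conj_eq_coe_iff d _ hd r).2 rfl, ← Quaternion.coe_neg]

lemma exists_w (x' w' : Quaternion ℝ) (r : ℝ) (hx0 : x' ≠ 0) (hx1 : x' ≠ 1)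
    (hr : x' * (1 - w') = (r : Quaternion ℝ) * (w' - x')) :
    ∃ α β : ℝ, w' = (α : Quaternion ℝ) + β • x' := by
  have h5 : ((1 + r : ℝ) : Quaternion ℝ) * x' = ((r : Quaternion ℝ) + x') * w' := by
    have e : ((1 + r : ℝ) : Quaternion ℝ) * x' - ((r : Quaternion ℝ) + x') * w'
        = x' * (1 - w') - (r : Quaternion ℝ) * (w' - x') := by
      push_cast
      noncomm_ring
    rw [hr, sub_self] at e
    exact sub_eq_zero.1 e
  have hne : (r : Quaternion ℝ) + x' ≠ 0 := by
    intro h0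
    have h6 : ((1 + r : ℝ) : Quaternion ℝ) * x' = 0 := by rw [h5, h0, zero_mul]
    rcases mul_eq_zero.1 h6 with h7 | h7
    · have h8 : (1 + r : ℝ) = 0 := by
        apply Quaternion.coe_injective
        rw [h7, Quaternion.coe_zero]
      have h9 : r = -1 := by linarith
      apply hx1
      have h10 : x' = -(r : Quaternion ℝ) := eq_neg_of_add_eq_zero_right h0
      rw [h10, h9, Quaternion.coe_neg, neg_neg, Quaternion.coe_one]
    · exact hx0 h7
  have hw : w' = ((r : Quaternion ℝ) + x')⁻¹ * (((1 + r : ℝ) : Quaternion ℝ) * x') := by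
    rw [h5, ← mul_assoc, inv_mul_cancel₀ hne, one_mul]
  set N := Quaternion.normSq ((r : Quaternion ℝ) + x') with hN
  refine ⟨N⁻¹ * (1 + r) * Quaternion.normSq x', N⁻¹ * (1 + r) * r, ?_⟩
  rw [hw, Quaternion.inv_def]
  have hstar : star ((r : Quaternion ℝ) + x') = (r : Quaternion ℝ) + star x' := by
    rw [star_add, Quaternion.star_coe]
  rw [hstar, Quaternion.coe_mul_eq_smul, smul_mul_assoc, mul_smul_comm, add_mul,
    Quaternion.star_mul_self, smul_smul]
  simp only [← Quaternion.coe_mul_eq_smul]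
  push_cast
  noncomm_ring

/-! ### Complex helpers -/

lemma complex_im_identity (x w : ℂ) :
    (x * (1 - w) * (starRingEnd ℂ) (w - x)).im
      = w.im * (Complex.normSq x - x.re) - x.im * (Complex.normSq w - w.re) := by
  simp only [Complex.mul_im, Complex.mul_re, Complex.sub_re, Complex.sub_im, Complex.one_re,
    Complex.one_im, Complex.conj_re, Complex.conj_im, Complex.normSq_apply]
  ring

lemma complex_exists_iff (x w : ℂ) (hwx : w ≠ x) :
    (∃ r : ℝ, x * (1 - w) = (r : ℂ) * (w - x)) ↔
      (x * (1 - w) * (starRingEnd ℂ) (w - x)).im = 0 := by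
  have hne : w - x ≠ 0 := sub_ne_zero.2 hwx
  constructor
  · rintro ⟨r, h⟩
    rw [h, mul_assoc, Complex.mul_conj]
    simp
  · intro h
    have hconj : (starRingEnd ℂ) (w - x) ≠ 0 := by
      rw [← Complex.star_def]; exact star_ne_zero.2 hne
    set ζ := x * (1 - w) * (starRingEnd ℂ) (w - x) with hζ
    have hζre : ζ = (ζ.re : ℂ) := Complex.ext rfl (by simpa using h)
    refine ⟨ζ.re / Complex.normSq (w - x), ?_⟩
    apply mul_right_cancel₀ hconj
    rw [← hζ, hζre, mul_assoc, Complex.mul_conj, ← Complex.ofReal_mul,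
      div_mul_cancel₀ _ (fun h0 => hne (Complex.normSq_eq_zero.1 h0)), Complex.ofReal_re]

/-! ### The embedding of ℂ determined by a unit imaginary quaternion -/

lemma phi_apply (v : Quaternion ℝ) (hv2 : v * v = -1) (z : ℂ) :
    (Complex.liftAux v hv2) z = (z.re : Quaternion ℝ) + z.im • v := by
  rw [Complex.liftAux_apply, Quaternion.algebraMap_def]

lemma phi_real (v : Quaternion ℝ) (hv2 : v * v = -1) (r : ℝ) :
    (Complex.liftAux v hv2) (r : ℂ) = (r : Quaternion ℝ) := by
  rw [phi_apply]
  simp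

lemma normSq_v (v : Quaternion ℝ) (hv2 : v * v = -1) (hvre : v.re = 0) :
    Quaternion.normSq v = 1 := by
  apply Quaternion.coe_injective
  rw [← Quaternion.self_mul_star, Quaternion.star_eq_neg.2 hvre, mul_neg, hv2, neg_neg,
    Quaternion.coe_one]

lemma norm_phi (v : Quaternion ℝ) (hv2 : v * v = -1) (hvre : v.re = 0) (z : ℂ) :
    ‖(Complex.liftAux v hv2) z‖ = ‖z‖ := by
  have hvsq : v.imI ^ 2 + v.imJ ^ 2 + v.imK ^ 2 = 1 := by
    have := normSq_v v hv2 hvre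
    rw [Quaternion.normSq_def', hvre] at this
    linarith
  have h : ‖(Complex.liftAux v hv2) z‖ * ‖(Complex.liftAux v hv2) z‖ = ‖z‖ * ‖z‖ := by
    rw [← Quaternion.normSq_eq_norm_mul_self, phi_apply, Quaternion.normSq_def']
    simp only [Quaternion.re_add, Quaternion.re_coe, Quaternion.re_smul, Quaternion.imI_add,
      Quaternion.imI_coe, Quaternion.imI_smul, Quaternion.imJ_add, Quaternion.imJ_coe,
      Quaternion.imJ_smul, Quaternion.imK_add, Quaternion.imK_coe, Quaternion.imK_smul, hvre,
      smul_eq_mul, mul_zero, add_zero, zero_add]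
    rw [Complex.norm_mul_self_eq_normSq, Complex.normSq_apply]
    nlinarith [hvsq]
  exact mul_self_inj_of_nonneg (norm_nonneg _) (norm_nonneg _) |>.1 h

lemma v_of (q : Quaternion ℝ) (hq : q.im ≠ 0) :
    ∃ v : Quaternion ℝ, v.re = 0 ∧ v * v = -1 ∧ q = (q.re : Quaternion ℝ) + ‖q.im‖ • v := by
  have hnorm : ‖q.im‖ ≠ 0 := norm_ne_zero_iff.2 hq
  refine ⟨‖q.im‖⁻¹ • q.im, ?_, ?_, ?_⟩
  · rw [Quaternion.re_smul, Quaternion.re_im, smul_zero]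
  · rw [smul_mul_smul_comm, show q.im * q.im = q.im ^ 2 from (sq q.im).symm, Quaternion.im_sq,
      Quaternion.normSq_eq_norm_mul_self, smul_neg, Quaternion.smul_coe,
      show ‖q.im‖⁻¹ * ‖q.im‖⁻¹ * (‖q.im‖ * ‖q.im‖) = (1:ℝ) by field_simp, Quaternion.coe_one]
  · rw [smul_smul, mul_inv_cancel₀ hnorm, one_smul, Quaternion.re_add_im]

lemma real_of_im_zero (q : Quaternion ℝ) (hq : q.im = 0) : q = (q.re : Quaternion ℝ) := by
  conv_lhs => rw [← Quaternion.re_add_im q]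
  rw [hq, add_zero]

lemma shift (a b α β : ℝ) (v x' w' : Quaternion ℝ)
    (hx : x' = (a : Quaternion ℝ) + b • v) (hw : w' = (α : Quaternion ℝ) + β • x') :
    w' = ((α + β * a : ℝ) : Quaternion ℝ) + (β * b) • v := by
  rw [hw, hx, smul_add, Quaternion.smul_coe, smul_smul, Quaternion.coe_add]
  abel

/-! ### Geometry helpers -/

lemma coplanar_aux (p u₁ u₂ : Quaternion ℝ) (s : Set (Quaternion ℝ))
    (hs : ∀ q ∈ s, ∃ a b : ℝ, q - p = a • u₁ + b • u₂) : Coplanar ℝ s := by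
  classical
  rw [coplanar_iff_finrank_le_two]
  have hle : vectorSpan ℝ s ≤ Submodule.span ℝ {u₁, u₂} := by
    rw [vectorSpan_def, Submodule.span_le]
    rintro x ⟨q1, hq1, q2, hq2, rfl⟩
    dsimp only
    obtain ⟨a1, b1, h1⟩ := hs q1 hq1
    obtain ⟨a2, b2, h2⟩ := hs q2 hq2
    have he : q1 -ᵥ q2 = (a1 - a2) • u₁ + (b1 - b2) • u₂ := by
      rw [vsub_eq_sub, show q1 - q2 = (q1 - p) - (q2 - p) by abel, h1, h2]
      rw [sub_smul, sub_smul]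
      abel
    rw [he]
    exact Submodule.add_mem _
      (Submodule.smul_mem _ _ (Submodule.subset_span (by simp)))
      (Submodule.smul_mem _ _ (Submodule.subset_span (by simp)))
  refine le_trans (Submodule.finrank_mono hle) ?_
  refine le_trans (finrank_span_le_card _) ?_
  simp only [Set.toFinset_insert, Set.toFinset_singleton]
  exact le_trans (Finset.card_insert_le _ _) (by simp)

lemma sphere_eq (d v m : Quaternion ℝ) (hv2 : v * v = -1) (hvre : v.re = 0) (z : ℂ) :
    ‖d * (Complex.liftAux v hv2) z - m‖ ^ 2
      = ‖d‖ ^ 2 * Complex.normSq z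
        - 2 * (z.re * (inner ℝ d m : ℝ) + z.im * (inner ℝ (d * v) m : ℝ)) + ‖m‖ ^ 2 := by
  have hφ : d * (Complex.liftAux v hv2) z = z.re • d + z.im • (d * v) := by
    rw [phi_apply, mul_add, mul_smul_comm, Quaternion.mul_coe_eq_smul]
  rw [norm_sub_sq_real]
  congr 2
  · rw [norm_mul, mul_pow, norm_phi v hv2 hvre, Complex.sq_norm]
  · rw [hφ, inner_add_left, real_inner_smul_left, real_inner_smul_left]

lemma cosph_construct (P₂ d v : Quaternion ℝ) (hv2 : v * v = -1) (hvre : v.re = 0)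
    (P₁ P₃ P₄ : Quaternion ℝ) (x w : ℂ) (t : ℝ)
    (hP1 : P₁ = P₂ + d * (Complex.liftAux v hv2) x)
    (hP3 : P₃ = P₂ + d)
    (hP4 : P₄ = P₂ + d * (Complex.liftAux v hv2) w)
    (hx : Complex.normSq x - x.re - 2 * t * x.im = 0)
    (hw : Complex.normSq w - w.re - 2 * t * w.im = 0) :
    Cospherical ({P₁, P₂, P₃, P₄} : Set (Quaternion ℝ)) := by
  refine ⟨P₂ + d * (Complex.liftAux v hv2) ⟨1/2, t⟩, ‖d‖ * Real.sqrt (1/4 + t^2), ?_⟩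
  have key : ∀ z : ℂ, Complex.normSq z - z.re - 2 * t * z.im = 0 →
      dist (P₂ + d * (Complex.liftAux v hv2) z) (P₂ + d * (Complex.liftAux v hv2) ⟨1/2, t⟩)
        = ‖d‖ * Real.sqrt (1/4 + t^2) := by
    intro z hz
    rw [dist_eq_norm, show (P₂ + d * (Complex.liftAux v hv2) z)
          - (P₂ + d * (Complex.liftAux v hv2) ⟨1/2, t⟩)
        = d * ((Complex.liftAux v hv2) z - (Complex.liftAux v hv2) ⟨1/2, t⟩) by
          rw [mul_sub]; abel,
      norm_mul, ← map_sub, norm_phi v hv2 hvre]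
    congr 1
    rw [Complex.norm_def]
    congr 1
    simp only [Complex.normSq_apply, Complex.sub_re, Complex.sub_im] at hz ⊢
    linear_combination hz
  intro p hp
  simp only [Set.mem_insert_iff, Set.mem_singleton_iff] at hp
  rcases hp with rfl | rfl | rfl | rfl
  · rw [hP1]; exact key x hx
  · have h0 := key 0 (by simp)
    simpa using h0
  · have h1 := key 1 (by simp [Complex.normSq_one])
    rw [hP3]
    simpa using h1
  · rw [hP4]; exact key w hw

lemma w_in_span (P₁ P₂ P₃ P₄ d x' w' : Quaternion ℝ) (hd : d ≠ 0)
    (hdd : d = P₃ - P₂) (hxd : x' = d⁻¹ * (P₁ - P₂)) (hwd : w' = d⁻¹ * (P₄ - P₂))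
    (hcop : Coplanar ℝ ({P₁, P₂, P₃, P₄} : Set (Quaternion ℝ))) (hxim : x'.im ≠ 0) :
    ∃ α β : ℝ, w' = (α : Quaternion ℝ) + β • x' := by
  classical
  set V := vectorSpan ℝ ({P₁, P₂, P₃, P₄} : Set (Quaternion ℝ)) with hV
  set f := LinearMap.mulLeft ℝ (d⁻¹ : Quaternion ℝ) with hf
  set U := V.map f with hU
  have hUfin : Module.finrank ℝ U ≤ 2 :=
    le_trans (Submodule.finrank_map_le f V) ((coplanar_iff_finrank_le_two).1 hcop)
  have hmem : ∀ A B : Quaternion ℝ, A ∈ ({P₁, P₂, P₃, P₄} : Set (Quaternion ℝ)) →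
      B ∈ ({P₁, P₂, P₃, P₄} : Set (Quaternion ℝ)) → d⁻¹ * (A - B) ∈ U := by
    intro A B hA hB
    refine ⟨A - B, ?_, rfl⟩
    rw [← vsub_eq_sub]
    exact vsub_mem_vectorSpan ℝ hA hB
  have h1U : (1 : Quaternion ℝ) ∈ U := by
    have := hmem P₃ P₂ (by simp) (by simp)
    rwa [← hdd, inv_mul_cancel₀ hd] at this
  have hxU : x' ∈ U := by
    have := hmem P₁ P₂ (by simp) (by simp)
    rwa [← hxd] at this
  have hwU : w' ∈ U := by
    have := hmem P₄ P₂ (by simp) (by simp)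
    rwa [← hwd] at this
  have hind : LinearIndependent ℝ ![(1 : Quaternion ℝ), x'] := by
    rw [LinearIndependent.pair_iff' one_ne_zero]
    intro a ha
    apply hxim
    rw [← ha, smul_one_coe, Quaternion.im_coe]
  have hrange : Set.range ![(1 : Quaternion ℝ), x'] = {1, x'} := by
    simp [Matrix.range_cons, Matrix.range_empty]
    exact Set.pair_comm x' 1
  have hfr : Module.finrank ℝ (Submodule.span ℝ {(1 : Quaternion ℝ), x'}) = 2 := by
    rw [← hrange, finrank_span_eq_card hind]
    simp
  have hle : Submodule.span ℝ {(1 : Quaternion ℝ), x'} ≤ U := by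
    rw [Submodule.span_le]
    rintro y hy
    rcases hy with rfl | hy
    · exact h1U
    · rw [Set.mem_singleton_iff] at hy
      subst hy
      exact hxU
  have heq : Submodule.span ℝ {(1 : Quaternion ℝ), x'} = U :=
    Submodule.eq_of_le_of_finrank_le hle (by rw [hfr]; exact hUfin)
  have hws : w' ∈ Submodule.span ℝ {(1 : Quaternion ℝ), x'} := by rw [heq]; exact hwU
  obtain ⟨α, β, hab⟩ := Submodule.mem_span_pair.1 hws
  exact ⟨α, β, by rw [← hab, smul_one_coe]⟩

end CRAux

theorem crossRatio_real_iff_collinear_or_concyclic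
    (P₁ P₂ P₃ P₄ : Quaternion ℝ)
    (hdist : List.Pairwise (· ≠ ·) [P₁, P₂, P₃, P₄]) :
    (∃ r : ℝ, crossRatio P₁ P₂ P₃ P₄ = (r : Quaternion ℝ)) ↔
      (Collinear ℝ ({P₁, P₂, P₃, P₄} : Set (Quaternion ℝ)) ∨
        EuclideanGeometry.Concyclic ({P₁, P₂, P₃, P₄} : Set (Quaternion ℝ))) := by
  classical
  have h12 : P₁ ≠ P₂ := List.rel_of_pairwise_cons hdist (by simp)
  have h13 : P₁ ≠ P₃ := List.rel_of_pairwise_cons hdist (by simp)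
  have h14 : P₁ ≠ P₄ := List.rel_of_pairwise_cons hdist (by simp)
  have hdist2 := hdist.of_cons
  have h23 : P₂ ≠ P₃ := List.rel_of_pairwise_cons hdist2 (by simp)
  have h24 : P₂ ≠ P₄ := List.rel_of_pairwise_cons hdist2 (by simp)
  have h34 : P₃ ≠ P₄ := List.rel_of_pairwise_cons hdist2.of_cons (by simp)
  set d := P₃ - P₂ with hdd
  set x' := d⁻¹ * (P₁ - P₂) with hxd
  set w' := d⁻¹ * (P₄ - P₂) with hwd
  have hd : d ≠ 0 := by rw [hdd]; exact sub_ne_zero.2 (Ne.symm h23)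
  have hiff := CRAux.crossRatio_iff P₁ P₂ P₃ P₄ d x' w' h23 h14 hdd hxd hwd
  have hmul : ∀ q : Quaternion ℝ, d * (d⁻¹ * q) = q := fun q => by
    rw [← mul_assoc, mul_inv_cancel₀ hd, one_mul]
  have hP1 : P₁ = P₂ + d * x' := by rw [hxd, hmul]; abel
  have hP3 : P₃ = P₂ + d := by rw [hdd]; abel
  have hP4 : P₄ = P₂ + d * w' := by rw [hwd, hmul]; abel
  have hx0 : x' ≠ 0 := by
    intro h0; apply h12
    have h := hP1; rw [h0, mul_zero, add_zero] at h; exact h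
  have hx1 : x' ≠ 1 := by
    intro h0; apply h13; rw [hP1, h0, mul_one, ← hP3]
  have hwx' : w' ≠ x' := by
    intro h0; apply h14; rw [hP1, hP4, h0]
  constructor
  · intro hEx
    obtain ⟨r, hr⟩ := hiff.1 hEx
    obtain ⟨α, β, hαβ⟩ := CRAux.exists_w x' w' r hx0 hx1 hr
    by_cases him : x'.im = 0
    · left
      have hx2 : x' = (x'.re : Quaternion ℝ) := CRAux.real_of_im_zero x' him
      have hw2 : w' = ((α + β * x'.re : ℝ) : Quaternion ℝ) := by
        rw [hαβ, hx2, Quaternion.smul_coe, Quaternion.coe_add, Quaternion.re_coe]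
      rw [collinear_iff_of_mem (show P₂ ∈ ({P₁, P₂, P₃, P₄} : Set (Quaternion ℝ)) by simp)]
      refine ⟨d, ?_⟩
      intro p hp
      simp only [Set.mem_insert_iff, Set.mem_singleton_iff] at hp
      rcases hp with rfl | rfl | rfl | rfl
      · exact ⟨x'.re, by rw [hP1, hx2, Quaternion.mul_coe_eq_smul, vadd_eq_add]; abel⟩
      · exact ⟨0, by rw [vadd_eq_add, zero_smul, zero_add]⟩
      · exact ⟨1, by rw [hP3, vadd_eq_add, one_smul]; abel⟩
      · exact ⟨α + β * x'.re, by rw [hP4, hw2, Quaternion.mul_coe_eq_smul, vadd_eq_add]; abel⟩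
    · right
      obtain ⟨v, hvre, hv2, hxv⟩ := CRAux.v_of x' him
      set x : ℂ := ⟨x'.re, ‖x'.im‖⟩ with hxdef
      set w : ℂ := ⟨α + β * x'.re, β * ‖x'.im‖⟩ with hwdef
      have hφx : (Complex.liftAux v hv2) x = x' := by
        rw [CRAux.phi_apply]; exact hxv.symm
      have hφw : (Complex.liftAux v hv2) w = w' := by
        rw [CRAux.phi_apply]
        exact (CRAux.shift x'.re ‖x'.im‖ α β v x' w' hxv hαβ).symm
      have hφinj : Function.Injective (Complex.liftAux v hv2) :=
        (Complex.liftAux v hv2).toRingHom.injective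
      have hrC : x * (1 - w) = (r : ℂ) * (w - x) := by
        apply hφinj
        rw [map_mul, map_sub, map_one, map_mul, map_sub, hφx, hφw, CRAux.phi_real]
        exact hr
      have hwx : w ≠ x := by
        intro h0; apply hwx'; rw [← hφx, ← hφw, h0]
      have hE := (CRAux.complex_exists_iff x w hwx).1 ⟨r, hrC⟩
      rw [CRAux.complex_im_identity] at hE
      have hb : x.im ≠ 0 := norm_ne_zero_iff.2 him
      set t : ℝ := (Complex.normSq x - x.re) / (2 * x.im) with ht
      have hxeq : Complex.normSq x - x.re - 2 * t * x.im = 0 := by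
        rw [ht]; field_simp; ring
      have hweq : Complex.normSq w - w.re - 2 * t * w.im = 0 := by
        rw [ht]; field_simp
        linear_combination (-1 : ℝ) * hE
      refine ⟨?_, ?_⟩
      · exact CRAux.cosph_construct P₂ d v hv2 hvre P₁ P₃ P₄ x w t
          (by rw [hφx]; exact hP1) hP3 (by rw [hφw]; exact hP4) hxeq hweq
      · apply CRAux.coplanar_aux P₂ d (d * v)
        have hexp : ∀ z : ℂ, d * (Complex.liftAux v hv2) z = z.re • d + z.im • (d * v) :=
          fun z => by rw [CRAux.phi_apply, mul_add, mul_smul_comm, Quaternion.mul_coe_eq_smul]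
        intro q hq
        simp only [Set.mem_insert_iff, Set.mem_singleton_iff] at hq
        rcases hq with rfl | rfl | rfl | rfl
        · exact ⟨x.re, x.im, by rw [hP1, ← hφx, hexp]; abel⟩
        · exact ⟨0, 0, by simp⟩
        · exact ⟨1, 0, by rw [hP3, one_smul, zero_smul, add_zero]; abel⟩
        · exact ⟨w.re, w.im, by rw [hP4, ← hφw, hexp]; abel⟩
  · rintro (hcol | ⟨hsph, hcop⟩)
    · obtain ⟨u, hu⟩ := (collinear_iff_of_mem
        (show P₂ ∈ ({P₁, P₂, P₃, P₄} : Set (Quaternion ℝ)) by simp)).1 hcol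
      obtain ⟨t1, ht1⟩ := hu P₁ (by simp)
      obtain ⟨t2, ht2⟩ := hu P₂ (by simp)
      obtain ⟨t3, ht3⟩ := hu P₃ (by simp)
      obtain ⟨t4, ht4⟩ := hu P₄ (by simp)
      simp only [vadd_eq_add] at ht1 ht2 ht3 ht4
      obtain ⟨r, hrl⟩ := CRAux.crossRatio_line P₂ u t1 t2 t3 t4
      refine ⟨r, ?_⟩
      rw [← ht1, ← ht2, ← ht3, ← ht4] at hrl
      exact hrl
    · by_cases hboth : x'.im = 0 ∧ w'.im = 0
      · have hx2 : x' = (x'.re : Quaternion ℝ) := CRAux.real_of_im_zero x' hboth.1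
        have hw2 : w' = (w'.re : Quaternion ℝ) := CRAux.real_of_im_zero w' hboth.2
        obtain ⟨r, hrl⟩ := CRAux.crossRatio_line P₂ d x'.re 0 1 w'.re
        refine ⟨r, ?_⟩
        have e1 : x'.re • d + P₂ = P₁ := by
          rw [hP1, ← Quaternion.mul_coe_eq_smul, ← hx2]; abel
        have e2 : (0:ℝ) • d + P₂ = P₂ := by rw [zero_smul, zero_add]
        have e3 : (1:ℝ) • d + P₂ = P₃ := by rw [hP3, one_smul]; abel
        have e4 : w'.re • d + P₂ = P₄ := by
          rw [hP4, ← Quaternion.mul_coe_eq_smul, ← hw2]; abel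
        rw [e1, e2, e3, e4] at hrl
        exact hrl
      · have hplane : ∃ (v : Quaternion ℝ) (a b c e : ℝ), v.re = 0 ∧ v * v = -1 ∧
            x' = (a : Quaternion ℝ) + b • v ∧ w' = (c : Quaternion ℝ) + e • v := by
          by_cases hxim : x'.im = 0
          · have hwim : w'.im ≠ 0 := fun h => hboth ⟨hxim, h⟩
            obtain ⟨v, hvre, hv2, hwv⟩ := CRAux.v_of w' hwim
            exact ⟨v, x'.re, 0, w'.re, ‖w'.im‖, hvre, hv2,
              by rw [zero_smul, add_zero]; exact CRAux.real_of_im_zero x' hxim, hwv⟩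
          · obtain ⟨v, hvre, hv2, hxv⟩ := CRAux.v_of x' hxim
            obtain ⟨α, β, hαβ⟩ := CRAux.w_in_span P₁ P₂ P₃ P₄ d x' w' hd hdd hxd hwd hcop hxim
            exact ⟨v, x'.re, ‖x'.im‖, α + β * x'.re, β * ‖x'.im‖, hvre, hv2, hxv,
              CRAux.shift x'.re ‖x'.im‖ α β v x' w' hxv hαβ⟩
        obtain ⟨v, a, b, c, e, hvre, hv2, hxv, hwv⟩ := hplane
        set x : ℂ := ⟨a, b⟩ with hxdef
        set w : ℂ := ⟨c, e⟩ with hwdef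
        have hφx : (Complex.liftAux v hv2) x = x' := by rw [CRAux.phi_apply]; exact hxv.symm
        have hφw : (Complex.liftAux v hv2) w = w' := by rw [CRAux.phi_apply]; exact hwv.symm
        obtain ⟨cc, R, hcr⟩ := hsph
        set m := cc - P₂ with hm
        have hdistf : ∀ (z : ℂ) (p : Quaternion ℝ), p = P₂ + d * (Complex.liftAux v hv2) z →
            p ∈ ({P₁, P₂, P₃, P₄} : Set (Quaternion ℝ)) →
            ‖d‖^2 * Complex.normSq z
              - 2 * (z.re * (inner ℝ d m : ℝ) + z.im * (inner ℝ (d * v) m : ℝ)) + ‖m‖^2 = R^2 := by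
          intro z p hp hmem
          have h := hcr p hmem
          rw [hp, dist_eq_norm, show (P₂ + d * (Complex.liftAux v hv2) z) - cc
              = d * (Complex.liftAux v hv2) z - m by rw [hm]; abel] at h
          rw [← CRAux.sphere_eq d v m hv2 hvre z, h]
        have e0 := hdistf 0 P₂ (by simp) (by simp)
        have e1 := hdistf 1 P₃ (by rw [map_one, mul_one]; exact hP3) (by simp)
        have exx := hdistf x P₁ (by rw [hφx]; exact hP1) (by simp)
        have eww := hdistf w P₄ (by rw [hφw]; exact hP4) (by simp)
        simp only [Complex.normSq_zero, Complex.normSq_one, Complex.zero_re, Complex.zero_im,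
          Complex.one_re, Complex.one_im, mul_zero, zero_mul, mul_one, add_zero, zero_add,
          sub_zero] at e0 e1
        have hdn : (‖d‖ : ℝ)^2 ≠ 0 := pow_ne_zero 2 (norm_ne_zero_iff.2 hd)
        have k1 : ‖d‖^2 * (Complex.normSq x - x.re)
            = 2 * (x.im * (inner ℝ (d * v) m : ℝ)) := by
          linear_combination exx - e0 - x.re * e1 + x.re * e0
        have k2 : ‖d‖^2 * (Complex.normSq w - w.re)
            = 2 * (w.im * (inner ℝ (d * v) m : ℝ)) := by
          linear_combination eww - e0 - w.re * e1 + w.re * e0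
        have hE : w.im * (Complex.normSq x - x.re) - x.im * (Complex.normSq w - w.re) = 0 := by
          have k3 : ‖d‖^2 * (w.im * (Complex.normSq x - x.re)
              - x.im * (Complex.normSq w - w.re)) = 0 := by
            linear_combination w.im * k1 - x.im * k2
          rcases mul_eq_zero.1 k3 with h | h
          · exact absurd h hdn
          · exact h
        have hwx : w ≠ x := fun h0 => hwx' (by rw [← hφx, ← hφw, h0])
        obtain ⟨r, hrC⟩ := (CRAux.complex_exists_iff x w hwx).2
          (by rw [CRAux.complex_im_identity]; exact hE)
        refine hiff.2 ⟨r, ?_⟩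
        have h := congrArg (Complex.liftAux v hv2) hrC
        rw [map_mul, map_sub, map_one, map_mul, map_sub, hφx, hφw, CRAux.phi_real] at h
        exact h
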